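/- Let c > 0 and define ‖(u₁,u₂)‖_@ := √(u₁² + c·u₂²) on ℝ². Let w₁, w₂, w₃ be a ℤ-basis of the lattice ℤ³, and let q₁ ≥ 1 and q₂ be the first coordinates of w₁ and w₂ respectively. Then there exist G ∈ GL₃(ℝ) and real numbers L > 0, H > 0 such that: (i) the first row of G is (1,0,0); (ii) the lower-right 2×2 block g of G satisfies ‖g(u)‖_@ = ‖u‖_@ for all u ∈ ℝ²; (iii) G w₁ = (q₁, 0, 0); (iv) G w₂ = (q₂, L, 0); (v) the third coordinate of G w₃ equals H; and (vi) q₁·L·H = 1. -/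

import Mathlib

open Real

noncomputable section

/-- the ellipse norm `‖(u₁,u₂)‖_@ = √(u₁² + c u₂²)`. -/
def nAt (c : ℝ) (u : ℝ × ℝ) : ℝ := Real.sqrt (u.1 ^ 2 + c * u.2 ^ 2)

/-- three vectors form a `ℤ`-basis of the lattice `ℤ³ = (Fin 3 → ℤ)`. -/
def IsZBasisFin3 (w₁ w₂ w₃ : Fin 3 → ℤ) : Prop :=
  Submodule.span ℤ ({w₁, w₂, w₃} : Set (Fin 3 → ℤ)) = ⊤ ∧
    LinearIndependent ℤ ![w₁, w₂, w₃]

private theorem ell_norm_pres (c S V₁ V₂ ε u₁ u₂ : ℝ) (hS : S ≠ 0)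
    (hS2 : S^2 = V₁^2 + c*V₂^2) (hε : ε = 1 ∨ ε = -1) :
    Real.sqrt ((V₁/S * u₁ + c*V₂/S * u₂)^2 + c * (-(ε*V₂)/S * u₁ + ε*V₁/S * u₂)^2)
      = Real.sqrt (u₁^2 + c*u₂^2) := by
  congr 1
  rcases hε with rfl | rfl
  · field_simp
    linear_combination (-(u₁^2 + c*u₂^2)) * hS2
  · field_simp
    linear_combination (-(u₁^2 + c*u₂^2)) * hS2

private theorem unit_det_of_zbasis (w₁ w₂ w₃ : Fin 3 → ℤ)
    (hsp : Submodule.span ℤ ({w₁, w₂, w₃} : Set (Fin 3 → ℤ)) = ⊤)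
    (hli : LinearIndependent ℤ ![w₁, w₂, w₃]) :
    IsUnit (Matrix.of (fun i j => ![w₁, w₂, w₃] j i)).det := by
  have hrange : Set.range ![w₁, w₂, w₃] = {w₁, w₂, w₃} := by
    ext x; simp [Fin.exists_fin_succ]; tauto
  let b : Module.Basis (Fin 3) ℤ (Fin 3 → ℤ) := Module.Basis.mk hli (by rw [hrange, hsp])
  have hinv : Invertible ((Pi.basisFun ℤ (Fin 3)).toMatrix b) :=
    (Pi.basisFun ℤ (Fin 3)).invertibleToMatrix b
  have heq : (Pi.basisFun ℤ (Fin 3)).toMatrix b = Matrix.of (fun i j => ![w₁, w₂, w₃] j i) := by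
    ext i j
    simp [Module.Basis.toMatrix_apply, b, Module.Basis.mk_apply]
  rw [← heq]
  exact (Matrix.isUnit_iff_isUnit_det _).mp (isUnit_of_invertible _)

set_option maxHeartbeats 2000000 in
theorem statement7
    (c : ℝ) (hc : 0 < c)
    (w₁ w₂ w₃ : Fin 3 → ℤ)
    (hbasis : IsZBasisFin3 w₁ w₂ w₃)
    (hq₁ : 1 ≤ w₁ 0) :
    ∃ (G : Matrix (Fin 3) (Fin 3) ℝ) (L H : ℝ), IsUnit G.det ∧ 0 < L ∧ 0 < H ∧
      -- (i) first row of G is (1, 0, 0)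
      (G 0 0 = 1 ∧ G 0 1 = 0 ∧ G 0 2 = 0) ∧
      -- (ii) the lower-right 2×2 block preserves ‖·‖_@
      (∀ u : ℝ × ℝ,
        nAt c (G 1 1 * u.1 + G 1 2 * u.2, G 2 1 * u.1 + G 2 2 * u.2) =
          nAt c u) ∧
      -- (iii) G w₁ = (q₁, 0, 0)
      G.mulVec (fun i => (w₁ i : ℝ)) = ![(w₁ 0 : ℝ), 0, 0] ∧
      -- (iv) G w₂ = (q₂, L, 0)
      G.mulVec (fun i => (w₂ i : ℝ)) = ![(w₂ 0 : ℝ), L, 0] ∧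
      -- (v) the third coordinate of G w₃ equals H
      G.mulVec (fun i => (w₃ i : ℝ)) 2 = H ∧
      -- (vi) q₁ · L · H = 1
      (w₁ 0 : ℝ) * L * H = 1 := by
  obtain ⟨hsp, hli⟩ := hbasis
  -- names for real entries
  set q : ℝ := (w₁ 0 : ℝ) with hqdef
  have hq0 : (0:ℝ) < q := by
    rw [hqdef]; exact_mod_cast lt_of_lt_of_le zero_lt_one hq₁
  have hqne : q ≠ 0 := ne_of_gt hq0
  -- nondegeneracy over ℤ
  have key : ¬ (w₁ 0 * w₂ 1 = w₂ 0 * w₁ 1 ∧ w₁ 0 * w₂ 2 = w₂ 0 * w₁ 2) := by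
    rintro ⟨h1, h2⟩
    have hz : ∑ i, (![w₂ 0, -(w₁ 0), 0] : Fin 3 → ℤ) i • (![w₁, w₂, w₃] : Fin 3 → Fin 3 → ℤ) i = 0 := by
      funext j
      fin_cases j
      · simp [Fin.sum_univ_three]; ring
      · simp [Fin.sum_univ_three]; linear_combination -h1
      · simp [Fin.sum_univ_three]; linear_combination -h2
    have := Fintype.linearIndependent_iff.mp hli ![w₂ 0, -(w₁ 0), 0] hz 1
    simp at this
    omega
  -- the combination vector
  set V₁ : ℝ := q * (w₂ 1 : ℝ) - (w₂ 0 : ℝ) * (w₁ 1 : ℝ) with hV₁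
  set V₂ : ℝ := q * (w₂ 2 : ℝ) - (w₂ 0 : ℝ) * (w₁ 2 : ℝ) with hV₂
  have hVpos : 0 < V₁^2 + c*V₂^2 := by
    rcases (not_and_or.mp key) with h | h
    · have : V₁ ≠ 0 := by
        rw [hV₁, hqdef]
        intro h0
        apply h
        have : ((w₁ 0 * w₂ 1 : ℤ) : ℝ) = ((w₂ 0 * w₁ 1 : ℤ) : ℝ) := by push_cast; linarith
        exact_mod_cast this
      positivity
    · have : V₂ ≠ 0 := by
        rw [hV₂, hqdef]
        intro h0
        apply h
        have : ((w₁ 0 * w₂ 2 : ℤ) : ℝ) = ((w₂ 0 * w₁ 2 : ℤ) : ℝ) := by push_cast; linarith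
        exact_mod_cast this
      positivity
  set S : ℝ := Real.sqrt (V₁^2 + c*V₂^2) with hSdef
  have hSpos : 0 < S := Real.sqrt_pos.mpr hVpos
  have hSne : S ≠ 0 := ne_of_gt hSpos
  have hS2 : S^2 = V₁^2 + c*V₂^2 := Real.sq_sqrt hVpos.le
  -- the integer matrix of the basis and its determinant sign
  set W : Matrix (Fin 3) (Fin 3) ℤ := Matrix.of (fun i j => ![w₁, w₂, w₃] j i) with hWdef
  have hWunit : IsUnit W.det := unit_det_of_zbasis w₁ w₂ w₃ hsp hli
  set ε : ℝ := (W.det : ℝ) with hεdef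
  have hε : ε = 1 ∨ ε = -1 := by
    rcases Int.isUnit_iff.mp hWunit with h | h <;> [left; right] <;> rw [hεdef, h] <;> norm_num
  -- the matrix G
  set a₁ : ℝ := -(V₁*(w₁ 1 : ℝ) + c*V₂*(w₁ 2 : ℝ))/(S*q) with ha₁
  set a₂ : ℝ := -(ε*(V₁*(w₁ 2 : ℝ) - V₂*(w₁ 1 : ℝ)))/(S*q) with ha₂
  set G : Matrix (Fin 3) (Fin 3) ℝ :=
    !![1, 0, 0; a₁, V₁/S, c*V₂/S; a₂, -(ε*V₂)/S, ε*V₁/S] with hGdef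
  set L : ℝ := S / q with hLdef
  have hLpos : 0 < L := div_pos hSpos hq0
  -- determinant of G
  have hGdet : G.det = ε := by
    rw [hGdef, Matrix.det_fin_three]
    simp
    field_simp
    linear_combination -ε * hS2
  -- mulVec computations
  have hGw₁ : G.mulVec (fun i => (w₁ i : ℝ)) = ![q, 0, 0] := by
    funext i
    fin_cases i <;>
      simp [hGdef, Matrix.mulVec, dotProduct, Fin.sum_univ_three, ha₁, ha₂] <;>
      (try field_simp) <;> ring
  have hGw₂ : G.mulVec (fun i => (w₂ i : ℝ)) = ![(w₂ 0 : ℝ), L, 0] := by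
    funext i
    fin_cases i
    · simp [hGdef, Matrix.mulVec, dotProduct, Fin.sum_univ_three]
    · simp [hGdef, Matrix.mulVec, dotProduct, Fin.sum_univ_three, ha₁, hLdef]
      rw [hV₁, hV₂] at hS2 ⊢
      field_simp
      linear_combination -hS2
    · simp [hGdef, Matrix.mulVec, dotProduct, Fin.sum_univ_three, ha₂]
      rw [hV₁, hV₂]
      field_simp
      ring
  set H : ℝ := G.mulVec (fun i => (w₃ i : ℝ)) 2 with hHdef
  -- the determinant relation q·L·H = 1
  have hqLH : q * L * H = 1 := by
    set Wr : Matrix (Fin 3) (Fin 3) ℝ := W.map (Int.castRingHom ℝ) with hWr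
    have hWrdet : Wr.det = ε := by
      rw [hεdef, hWr]
      exact (RingHom.map_det (Int.castRingHom ℝ) W).symm
    have hMent : ∀ i j, (G * Wr) i j = G.mulVec (fun k => ((![w₁, w₂, w₃] j k : ℤ) : ℝ)) i := by
      intro i j
      simp [Matrix.mul_apply, Matrix.mulVec, dotProduct, hWr, hWdef, Matrix.map_apply, Fin.sum_univ_three]
    have hdet1 : (G * Wr).det = ε * ε := by
      rw [Matrix.det_mul, hGdet, hWrdet]
    have hdet2 : (G * Wr).det = q * L * H := by
      rw [Matrix.det_fin_three]
      rw [hMent 0 0, hMent 1 0, hMent 2 0, hMent 0 1, hMent 1 1, hMent 2 1,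
        hMent 0 2, hMent 1 2, hMent 2 2]
      simp only [Matrix.cons_val_zero, Matrix.cons_val_one, Matrix.head_cons,
        Matrix.cons_val_two, Matrix.tail_cons]
      rw [hGw₁, hGw₂]
      simp [hHdef]
    have : q * L * H = ε * ε := by rw [← hdet1, hdet2]
    rw [this]
    rcases hε with h | h <;> norm_num [h]
  have hHpos : 0 < H := by
    nlinarith [mul_pos hq0 hLpos]
  refine ⟨G, L, H, ?_, hLpos, hHpos, ?_, ?_, ?_, ?_, hHdef.symm, hqLH⟩
  · rw [hGdet]
    rcases hε with h | h <;> norm_num [h]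
  · refine ⟨?_, ?_, ?_⟩ <;> simp [hGdef]
  · intro u
    have h11 : G 1 1 = V₁/S := by simp [hGdef]
    have h12 : G 1 2 = c*V₂/S := by simp [hGdef]
    have h21 : G 2 1 = -(ε*V₂)/S := by simp [hGdef]
    have h22 : G 2 2 = ε*V₁/S := by simp [hGdef]
    rw [h11, h12, h21, h22]
    simp only [nAt]
    exact ell_norm_pres c S V₁ V₂ ε u.1 u.2 hSne hS2 hε
  · exact hGw₁
  · exact hGw₂
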